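/- Let R ⊆ V and u ∈ V \ R. Let hsd(u,R) = { v ∈ subtree(u) ∩ R : v ≠ u and path(v,u) ∩ R = ∅ } be the set of descendants of u lying in R whose lowest ancestor in R ∪ {u} is u, and let lsa(u,R) denote the lowest ancestor of u in R if anc(u) ∩ R ≠ ∅ (the unique v ∈ anc(u) ∩ R with path(u,v) ∩ R = ∅), with the convention E[I(u|{lsa(u,R)})] := E[I(u|∅)] when anc(u) ∩ R = ∅. Then the marginal benefit satisfies B(R ∪ {u}) − B(R) = E[I(u|{lsa(u,R)})] · ( U(u) − Σ_{v ∈ hsd(u,R)} U(v) ). -/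
import Mathlib


open scoped Classical

section TreeDefs

variable {V : Type*}

/-- The set of strict ancestors of `u` in the rooted tree given by `parent`. -/
def ancSet (parent : V → V) (u : V) : Set V :=
  {v | v ≠ u ∧ ∃ n : ℕ, parent^[n] u = v}

/-- The set of nodes of the subtree rooted at `u` (including `u`). -/
def subtreeSet (parent : V → V) (u : V) : Set V :=
  {x | ∃ n : ℕ, parent^[n] x = u}

/-- The set of nodes strictly between `u` and its ancestor `v`. -/
def pathSet (parent : V → V) (u v : V) : Set V :=
  {w | w ∈ ancSet parent u ∧ v ∈ ancSet parent w}

/-- A node is internal if it has at least one child. -/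
def isInternal (parent : V → V) (u : V) : Prop :=
  ∃ w, w ≠ u ∧ parent w = u

/-- `T` is binary with left-child map `lc` and right-child map `rc`. -/
def isBinary (parent lc rc : V → V) : Prop :=
  ∀ u, isInternal parent u →
    lc u ≠ rc u ∧ parent (lc u) = u ∧ parent (rc u) = u ∧
    lc u ≠ u ∧ rc u ≠ u ∧
    ∀ w, w ≠ u → parent w = u → w = lc u ∨ w = rc u

/-- The usefulness indicator `I_q(u|R)` of node `u` for a query with
summed-out variables `Zq`, with respect to the materialized set `R`. -/
noncomputable def useful {α : Type*} (parent : V → V) (vars : V → Set α)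
    (Zq : Set α) (u : V) (R : Set V) : ℝ :=
  if vars u ⊆ Zq ∧ ∀ v ∈ ancSet parent u ∩ R, ¬ vars v ⊆ Zq then 1 else 0

/-- The expected usefulness `E[I(u|R)]` over the query distribution. -/
noncomputable def eInd {α Q : Type*} [Fintype Q] (parent : V → V) (vars : V → Set α)
    (Z : Q → Set α) (Pr : Q → ℝ) (u : V) (R : Set V) : ℝ :=
  ∑ q : Q, Pr q * useful parent vars (Z q) u R

/-- The utility `U(u) = Σ_{x ∈ subtree(u)} c(x)`. -/
noncomputable def util [Fintype V] (parent : V → V) (c : V → ℝ) (u : V) : ℝ :=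
  ∑ x ∈ Finset.univ.filter (fun x => x ∈ subtreeSet parent u), c x

/-- The benefit `B(R) = Σ_{u ∈ R} E[I(u|R)] · U(u)`. -/
noncomputable def benefit [Fintype V] {α Q : Type*} [Fintype Q]
    (parent : V → V) (vars : V → Set α) (Z : Q → Set α) (Pr : Q → ℝ)
    (c : V → ℝ) (R : Finset V) : ℝ :=
  ∑ u ∈ R, eInd parent vars Z Pr u (↑R) * util parent c u

/-- The partial benefit `pB_u(R) = Σ_{w ∈ R ∩ subtree(u)} E[I(w|R)] · U(w)`. -/
noncomputable def pB [Fintype V] {α Q : Type*} [Fintype Q]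
    (parent : V → V) (vars : V → Set α) (Z : Q → Set α) (Pr : Q → ℝ)
    (c : V → ℝ) (u : V) (R : Finset V) : ℝ :=
  ∑ w ∈ R.filter (fun w => w ∈ subtreeSet parent u),
    eInd parent vars Z Pr w (↑R) * util parent c w

end TreeDefs
section Helpers

variable {V : Type*}

lemma iterate_fixed {parent : V → V} {root : V} (hroot : parent root = root) :
    ∀ n : ℕ, parent^[n] root = root := by
  intro n
  induction n with
  | zero => rfl
  | succ n ih => rw [Function.iterate_succ_apply', ih, hroot]

lemma no_cycle {parent : V → V} {root : V} (hroot : parent root = root)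
    (hreach : ∀ u, ∃ n : ℕ, parent^[n] u = root)
    {w : V} {n : ℕ} (hn : 0 < n) (h : parent^[n] w = w) : w = root := by
  obtain ⟨m, hm⟩ := hreach w
  have hmul : ∀ k : ℕ, parent^[n * k] w = w := by
    intro k
    induction k with
    | zero => simp
    | succ k ih => rw [Nat.mul_succ, Function.iterate_add_apply, h, ih]
  have hle : m ≤ n * (m + 1) := by
    calc m ≤ 1 * (m + 1) := by omega
    _ ≤ n * (m + 1) := Nat.mul_le_mul_right _ hn
  calc w = parent^[n * (m + 1)] w := (hmul (m + 1)).symm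
    _ = parent^[n * (m + 1) - m] (parent^[m] w) := by
        rw [← Function.iterate_add_apply, Nat.sub_add_cancel hle]
    _ = root := by rw [hm, iterate_fixed hroot]

lemma anc_antisymm {parent : V → V} {root : V} (hroot : parent root = root)
    (hreach : ∀ u, ∃ n : ℕ, parent^[n] u = root)
    {u w : V} (h1 : w ∈ ancSet parent u) (h2 : u ∈ ancSet parent w) : False := by
  obtain ⟨hne1, a, ha⟩ := h1
  obtain ⟨hne2, b, hb⟩ := h2
  have ha0 : a ≠ 0 := by rintro rfl; exact hne1 ha.symm
  have hcyc : parent^[b + a] u = u := by rw [Function.iterate_add_apply, ha, hb]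
  have hur : u = root := no_cycle hroot hreach (by omega) hcyc
  subst hur
  exact hne1 (by rw [← ha, iterate_fixed hroot])

lemma chain_cases {parent : V → V} {w x u : V} {n m : ℕ}
    (hx : parent^[n] w = x) (hu : parent^[m] w = u) :
    (∃ k : ℕ, parent^[k] x = u) ∨ (∃ k : ℕ, parent^[k] u = x) := by
  rcases le_total n m with h | h
  · exact Or.inl ⟨m - n, by rw [← hx, ← Function.iterate_add_apply, Nat.sub_add_cancel h, hu]⟩
  · exact Or.inr ⟨n - m, by rw [← hu, ← Function.iterate_add_apply, Nat.sub_add_cancel h, hx]⟩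

lemma anc_inter_eq {parent : V → V} {root : V} (hroot : parent root = root)
    (hreach : ∀ u, ∃ n : ℕ, parent^[n] u = root)
    {u w : V} {R : Finset V} (hu : u ∉ R)
    (hsub : w ∈ subtreeSet parent u) (hne : w ≠ u)
    (hpath : pathSet parent w u ∩ (↑R : Set V) = ∅) :
    ancSet parent w ∩ (↑R : Set V) = ancSet parent u ∩ (↑R : Set V) := by
  obtain ⟨m, hm⟩ := hsub
  ext x
  simp only [Set.mem_inter_iff, Finset.mem_coe]
  constructor
  · rintro ⟨⟨hxw, n, hn⟩, hxR⟩
    have hxu : x ≠ u := by rintro rfl; exact hu hxR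
    rcases chain_cases hn hm with ⟨k, hk⟩ | ⟨k, hk⟩
    · exfalso
      have hmem : x ∈ pathSet parent w u ∩ (↑R : Set V) :=
        ⟨⟨⟨hxw, n, hn⟩, ⟨hxu.symm, k, hk⟩⟩, hxR⟩
      rw [hpath] at hmem
      exact hmem
    · exact ⟨⟨hxu, k, hk⟩, hxR⟩
  · rintro ⟨⟨hxu, k, hk⟩, hxR⟩
    refine ⟨⟨?_, k + m, ?_⟩, hxR⟩
    · rintro rfl
      exact anc_antisymm hroot hreach ⟨hxu, k, hk⟩ ⟨Ne.symm hne, m, hm⟩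
    · rw [Function.iterate_add_apply, hm, hk]

end Helpers
section UsefulLemmas

variable {V : Type*}

lemma useful_eq_iff {α : Type*} {parent : V → V} {vars : V → Set α} {Zq : Set α}
    {u : V} {S T : Set V}
    (h : (∀ v ∈ ancSet parent u ∩ S, ¬ vars v ⊆ Zq) ↔
        (∀ v ∈ ancSet parent u ∩ T, ¬ vars v ⊆ Zq)) :
    useful parent vars Zq u S = useful parent vars Zq u T := by
  unfold useful
  by_cases h1 : vars u ⊆ Zq ∧ ∀ v ∈ ancSet parent u ∩ T, ¬ vars v ⊆ Zq
  · rw [if_pos ⟨h1.1, h.mpr h1.2⟩, if_pos h1]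
  · rw [if_neg (fun hc => h1 ⟨hc.1, h.mp hc.2⟩), if_neg h1]

lemma useful_congr {α : Type*} {parent : V → V} {vars : V → Set α} {Zq : Set α}
    {u : V} {S T : Set V} (h : ancSet parent u ∩ S = ancSet parent u ∩ T) :
    useful parent vars Zq u S = useful parent vars Zq u T :=
  useful_eq_iff (by rw [h])

lemma eInd_congr {α Q : Type*} [Fintype Q] {parent : V → V} {vars : V → Set α}
    {Z : Q → Set α} {Pr : Q → ℝ} {u : V} {S T : Set V}
    (h : ancSet parent u ∩ S = ancSet parent u ∩ T) :
    eInd parent vars Z Pr u S = eInd parent vars Z Pr u T :=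
  Finset.sum_congr rfl fun q _ => by rw [useful_congr h]

/-- For `w` in `hsd(u,R)`, the usefulness after inserting `u` drops by the
usefulness of `u`. -/
lemma useful_hsd {α : Type*} [DecidableEq V] {parent : V → V} {root : V} (hroot : parent root = root)
    (hreach : ∀ u, ∃ n : ℕ, parent^[n] u = root)
    {vars : V → Set α} (hvars : ∀ u v : V, v ∈ ancSet parent u → vars u ⊆ vars v)
    {Zq : Set α} {u w : V} {R : Finset V} (hu : u ∉ R)
    (hsub : w ∈ subtreeSet parent u) (hne : w ≠ u)
    (hpath : pathSet parent w u ∩ (↑R : Set V) = ∅) :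
    useful parent vars Zq w ↑(insert u R) =
      useful parent vars Zq w ↑R - useful parent vars Zq u ↑R := by
  have hancw : ancSet parent w ∩ (↑R : Set V) = ancSet parent u ∩ (↑R : Set V) :=
    anc_inter_eq hroot hreach hu hsub hne hpath
  have huanc : u ∈ ancSet parent w := ⟨Ne.symm hne, hsub⟩
  have hvw : vars w ⊆ vars u := hvars w u huanc
  by_cases hZu : vars u ⊆ Zq
  · by_cases hP : ∀ v ∈ ancSet parent u ∩ (↑R : Set V), ¬ vars v ⊆ Zq
    · have e1 : useful parent vars Zq w ↑(insert u R) = 0 := by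
        rw [useful, if_neg]
        rintro ⟨-, hB⟩
        exact hB u ⟨huanc, Finset.mem_coe.mpr (Finset.mem_insert_self u R)⟩ hZu
      have e2 : useful parent vars Zq w ↑R = 1 := by
        rw [useful, if_pos ⟨hvw.trans hZu, fun v hv => hP v (hancw ▸ hv)⟩]
      have e3 : useful parent vars Zq u ↑R = 1 := by rw [useful, if_pos ⟨hZu, hP⟩]
      rw [e1, e2, e3]; norm_num
    · push_neg at hP
      obtain ⟨v, hv, hvZ⟩ := hP
      have hvw' : v ∈ ancSet parent w ∩ (↑R : Set V) := hancw.symm ▸ hv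
      have e1 : useful parent vars Zq w ↑(insert u R) = 0 := by
        rw [useful, if_neg]
        rintro ⟨-, hB⟩
        exact hB v ⟨hvw'.1, Finset.mem_coe.mpr (Finset.mem_insert_of_mem
          (Finset.mem_coe.mp hvw'.2))⟩ hvZ
      have e2 : useful parent vars Zq w ↑R = 0 := by
        rw [useful, if_neg]
        rintro ⟨-, hB⟩
        exact hB v hvw' hvZ
      have e3 : useful parent vars Zq u ↑R = 0 := by
        rw [useful, if_neg]
        rintro ⟨-, hB⟩
        exact hB v hv hvZ
      rw [e1, e2, e3]; norm_num
  · have e3 : useful parent vars Zq u ↑R = 0 := by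
      rw [useful, if_neg]; rintro ⟨h1, -⟩; exact hZu h1
    have e1 : useful parent vars Zq w ↑(insert u R) = useful parent vars Zq w ↑R := by
      apply useful_eq_iff
      constructor
      · intro h2
        exact fun v hv => h2 v ⟨hv.1, Finset.mem_coe.mpr
          (Finset.mem_insert_of_mem (Finset.mem_coe.mp hv.2))⟩
      · intro h2
        intro v hv
        rcases Finset.mem_insert.mp (Finset.mem_coe.mp hv.2) with rfl | hvR
        · exact hZu
        · exact h2 v ⟨hv.1, Finset.mem_coe.mpr hvR⟩
    rw [e1, e3]; ring

/-- For `w ∈ R` not in `hsd(u,R)`, the usefulness is unchanged. -/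
lemma useful_unchanged {α : Type*} [DecidableEq V] {parent : V → V} {root : V} (hroot : parent root = root)
    (hreach : ∀ u, ∃ n : ℕ, parent^[n] u = root)
    {vars : V → Set α} (hvars : ∀ u v : V, v ∈ ancSet parent u → vars u ⊆ vars v)
    {Zq : Set α} {u w : V} {R : Finset V} (hu : u ∉ R) (hw : w ∈ R)
    (hnot : ¬ (w ∈ subtreeSet parent u ∧ w ≠ u ∧ pathSet parent w u ∩ (↑R : Set V) = ∅)) :
    useful parent vars Zq w ↑(insert u R) = useful parent vars Zq w ↑R := by
  have hne : w ≠ u := by rintro rfl; exact hu hw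
  by_cases hsub : w ∈ subtreeSet parent u
  · -- path(w,u) ∩ R ≠ ∅
    have hpath : pathSet parent w u ∩ (↑R : Set V) ≠ ∅ := by
      intro h; exact hnot ⟨hsub, hne, h⟩
    obtain ⟨v, hv⟩ := Set.nonempty_iff_ne_empty.mpr hpath
    obtain ⟨⟨hvancw, hvancu⟩, hvR⟩ := hv
    -- vars v ⊆ vars u since u ∈ anc v
    have hvu : vars v ⊆ vars u := hvars v u hvancu
    by_cases hZu : vars u ⊆ Zq
    · have e1 : useful parent vars Zq w ↑(insert u R) = 0 := by
        rw [useful, if_neg]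
        rintro ⟨-, hB⟩
        exact hB v ⟨hvancw, Finset.mem_coe.mpr (Finset.mem_insert_of_mem
          (Finset.mem_coe.mp hvR))⟩ (hvu.trans hZu)
      have e2 : useful parent vars Zq w ↑R = 0 := by
        rw [useful, if_neg]
        rintro ⟨-, hB⟩
        exact hB v ⟨hvancw, hvR⟩ (hvu.trans hZu)
      rw [e1, e2]
    · apply useful_eq_iff
      constructor
      · intro h2
        exact fun x hx => h2 x ⟨hx.1, Finset.mem_coe.mpr
          (Finset.mem_insert_of_mem (Finset.mem_coe.mp hx.2))⟩
      · intro h2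
        intro x hx
        rcases Finset.mem_insert.mp (Finset.mem_coe.mp hx.2) with rfl | hxR
        · exact hZu
        · exact h2 x ⟨hx.1, Finset.mem_coe.mpr hxR⟩
  · -- u ∉ anc w, so the ancestor sets agree
    apply useful_congr
    ext x
    simp only [Set.mem_inter_iff, Finset.mem_coe, Finset.mem_insert]
    constructor
    · rintro ⟨hxa, rfl | hxR⟩
      · exact absurd hxa.2 (by rintro ⟨n, hn⟩; exact hsub ⟨n, hn⟩)
      · exact ⟨hxa, hxR⟩
    · rintro ⟨hxa, hxR⟩
      exact ⟨hxa, Or.inr hxR⟩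

end UsefulLemmas
/-- Marginal benefit: for `R ⊆ V` and `u ∉ R`, with
`hsd(u,R) = {v ∈ subtree(u) ∩ R : v ≠ u, path(v,u) ∩ R = ∅}` and `lsa(u,R)`
the lowest ancestor of `u` in `R` (with `E[I(u|{lsa(u,R)})] := E[I(u|∅)]`
when `anc(u) ∩ R = ∅`),
`B(R ∪ {u}) − B(R) = E[I(u|{lsa(u,R)})] · (U(u) − Σ_{v ∈ hsd(u,R)} U(v))`. -/
theorem marginal_benefit_formula {V α Q : Type*} [Fintype V] [DecidableEq V] [Fintype Q]
    (root : V) (parent : V → V)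
    (hroot : parent root = root)
    (hreach : ∀ u, ∃ n : ℕ, parent^[n] u = root)
    (vars : V → Set α)
    (hvars : ∀ u v : V, v ∈ ancSet parent u → vars u ⊆ vars v)
    (Z : Q → Set α) (Pr : Q → ℝ)
    (hPr0 : ∀ q, 0 ≤ Pr q) (hPr1 : ∑ q : Q, Pr q = 1)
    (c : V → ℝ) (hc : ∀ x, 0 ≤ c x)
    (R : Finset V) (u : V) (hu : u ∉ R) :
    (ancSet parent u ∩ (↑R : Set V) = ∅ →
      benefit parent vars Z Pr c (insert u R) - benefit parent vars Z Pr c R =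
        eInd parent vars Z Pr u ∅ *
          (util parent c u -
            ∑ w ∈ R.filter (fun w => w ∈ subtreeSet parent u ∧ w ≠ u ∧
                pathSet parent w u ∩ (↑R : Set V) = ∅),
              util parent c w)) ∧
    (∀ v ∈ R, v ∈ ancSet parent u → pathSet parent u v ∩ (↑R : Set V) = ∅ →
      benefit parent vars Z Pr c (insert u R) - benefit parent vars Z Pr c R =
        eInd parent vars Z Pr u {v} *
          (util parent c u -
            ∑ w ∈ R.filter (fun w => w ∈ subtreeSet parent u ∧ w ≠ u ∧
                pathSet parent w u ∩ (↑R : Set V) = ∅),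
              util parent c w)) := by
  -- the set hsd(u,R) as a predicate
  set P : V → Prop := fun w => w ∈ subtreeSet parent u ∧ w ≠ u ∧
      pathSet parent w u ∩ (↑R : Set V) = ∅ with hP
  -- core identity: marginal benefit = eInd(u,R) * (U(u) - Σ_{hsd} U(w))
  have hEu : eInd parent vars Z Pr u ↑(insert u R) = eInd parent vars Z Pr u ↑R := by
    apply eInd_congr
    ext x
    simp only [Set.mem_inter_iff, Finset.mem_coe, Finset.mem_insert]
    constructor
    · rintro ⟨hxa, rfl | hxR⟩
      · exact absurd rfl hxa.1
      · exact ⟨hxa, hxR⟩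
    · rintro ⟨hxa, hxR⟩
      exact ⟨hxa, Or.inr hxR⟩
  have hkey : ∀ w ∈ R, eInd parent vars Z Pr w ↑(insert u R) =
      eInd parent vars Z Pr w ↑R -
        (if P w then eInd parent vars Z Pr u ↑R else 0) := by
    intro w hw
    by_cases hPw : P w
    · rw [if_pos hPw]
      obtain ⟨hsub, hne, hpath⟩ := hPw
      unfold eInd
      rw [← Finset.sum_sub_distrib]
      refine Finset.sum_congr rfl fun q _ => ?_
      rw [useful_hsd hroot hreach hvars hu hsub hne hpath]
      ring
    · rw [if_neg hPw, sub_zero]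
      refine Finset.sum_congr rfl fun q _ => ?_
      rw [useful_unchanged hroot hreach hvars hu hw hPw]
  have core : benefit parent vars Z Pr c (insert u R) - benefit parent vars Z Pr c R =
      eInd parent vars Z Pr u ↑R *
        (util parent c u - ∑ w ∈ R.filter P, util parent c w) := by
    unfold benefit
    rw [Finset.sum_insert hu, hEu]
    have hsum : ∀ w ∈ R, eInd parent vars Z Pr w ↑(insert u R) * util parent c w =
        eInd parent vars Z Pr w ↑R * util parent c w -
          (if P w then eInd parent vars Z Pr u ↑R * util parent c w else 0) := by
      intro w hw
      rw [hkey w hw, sub_mul, ite_mul, zero_mul]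
    rw [Finset.sum_congr rfl hsum, Finset.sum_sub_distrib, ← Finset.sum_filter,
      ← Finset.mul_sum]
    ring
  constructor
  · intro hanc
    have : eInd parent vars Z Pr u (∅ : Set V) = eInd parent vars Z Pr u ↑R := by
      apply eInd_congr
      rw [Set.inter_empty, hanc]
    rw [core, this]
  · intro v hvR hvanc hpath
    have : eInd parent vars Z Pr u ({v} : Set V) = eInd parent vars Z Pr u ↑R := by
      unfold eInd
      refine Finset.sum_congr rfl fun q _ => ?_
      congr 1
      apply useful_eq_iff
      constructor
      · intro h2
        intro x hx
        obtain ⟨⟨hxu, n, hn⟩, hxR⟩ := hx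
        obtain ⟨hvu, m, hm⟩ := hvanc
        rcases chain_cases hn hm with ⟨k, hk⟩ | ⟨k, hk⟩
        · -- parent^[k] x = v
          by_cases hxv : x = v
          · subst hxv; exact h2 x ⟨⟨hxu, n, hn⟩, rfl⟩
          · exfalso
            have hmem : x ∈ pathSet parent u v ∩ (↑R : Set V) :=
              ⟨⟨⟨hxu, n, hn⟩, ⟨Ne.symm hxv, k, hk⟩⟩, hxR⟩
            rw [hpath] at hmem
            exact hmem
        · -- parent^[k] v = x
          by_cases hxv : x = v
          · subst hxv; exact h2 x ⟨⟨hxu, n, hn⟩, rfl⟩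
          · intro hxZ
            have hvv : vars v ⊆ vars x := hvars v x ⟨hxv, k, hk⟩
            exact h2 v ⟨⟨hvu, m, hm⟩, rfl⟩ (hvv.trans hxZ)
      · intro h2
        intro x hx
        obtain ⟨hxa, hxv⟩ := hx
        have : x = v := hxv
        subst this
        exact h2 x ⟨hxa, Finset.mem_coe.mpr hvR⟩
    rw [core, this]
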